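/- For any IIS run E with round view functions Vᵣ on the infinitely-participating set P, and any i ∈ P: i is in the sink strongly connected component SC of G* if and only if there exists r₀ such that for all r ≥ r₀, every j ∈ Vᵣ(i) has a directed path to i in the graph G⁽ʳ⁾ = union of the round graphs Gₛ for s ≥ r (where Gₛ has edge (a,b) iff b ∈ Vₛ(a)). -/

import Mathlib

/-- Proposition 1 (fast-graph-fast): for an IIS run with round views `V r`
on the infinitely-participating set `P`, a process `i` belongs to the sink
strongly connected component `SC` of the limit graph `G*` iff from some round
`r₀` on, every process in `i`'s view has a directed path to `i` in the tail
graph `G⁽ʳ⁾ = ⋃_{s ≥ r} G_s` (where `G_s` has edge `(a,b)` iff `b ∈ V s a`). -/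
theorem strongly_correct_iff_eventually_seen
    {P : Type*} [Fintype P] [DecidableEq P] [Nonempty P]
    (V : ℕ → P → Finset P)
    (hself : ∀ r i, i ∈ V r i)
    (hcontain : ∀ r i j, V r i ⊆ V r j ∨ V r j ⊆ V r i)
    (himm : ∀ r i j, i ∈ V r j → V r i ⊆ V r j)
    (Gstar : P → P → Prop)
    (hG : ∀ a b, Gstar a b ↔ {s | b ∈ V s a}.Infinite)
    (SC : Set P)
    (hSCne : SC.Nonempty)
    (hSCconn : ∀ a ∈ SC, ∀ b ∈ SC, Relation.ReflTransGen Gstar a b)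
    (hSCsink : ∀ a ∈ SC, ∀ v, Relation.ReflTransGen Gstar a v → v ∈ SC) :
    ∀ i : P, i ∈ SC ↔
      ∃ r₀ : ℕ, ∀ r ≥ r₀, ∀ j ∈ V r i,
        Relation.ReflTransGen (fun a b => ∃ s, r ≤ s ∧ b ∈ V s a) j i := by
  classical
  -- Key fact: beyond some round `N`, every single edge occurs infinitely often.
  have key : ∃ N : ℕ, ∀ s, N ≤ s → ∀ u w : P, w ∈ V s u → {t | w ∈ V t u}.Infinite := by
    have h : ∀ p : P × P, ∃ n : ℕ,
        ¬ {t | p.2 ∈ V t p.1}.Infinite → ∀ s, n ≤ s → p.2 ∉ V s p.1 := by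
      intro p
      by_cases h' : {t | p.2 ∈ V t p.1}.Infinite
      · exact ⟨0, fun h => absurd h' h⟩
      · rw [Set.not_infinite] at h'
        obtain ⟨n, hn⟩ := h'.bddAbove
        refine ⟨n + 1, fun _ s hs hmem => ?_⟩
        have := hn hmem
        omega
    choose f hf using h
    refine ⟨Finset.univ.sup f, fun s hs u w hw => ?_⟩
    by_contra hinf
    exact hf (u, w) hinf s
      (le_trans (Finset.le_sup (Finset.mem_univ (u, w))) hs) hw
  obtain ⟨N, hN⟩ := key
  intro i
  constructor
  · -- forward direction
    intro hi
    refine ⟨N, fun r hr j hj => ?_⟩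
    have hGij : Gstar i j := (hG i j).2 (hN r hr i j hj)
    have hjSC : j ∈ SC := hSCsink i hi j (Relation.ReflTransGen.single hGij)
    refine Relation.ReflTransGen.mono ?_ _ _ (hSCconn j hjSC i hi)
    intro a b hab
    obtain ⟨s, hs, hs'⟩ := ((hG a b).1 hab).exists_gt r
    exact ⟨s, le_of_lt hs', hs⟩
  · -- backward direction
    rintro ⟨r₀, H⟩
    obtain ⟨a, ha⟩ := hSCne
    set s := max r₀ N with hs_def
    by_cases hmem : i ∈ V s a
    · have : Gstar a i := (hG a i).2 (hN s (le_max_right _ _) a i hmem)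
      exact hSCsink a ha i (Relation.ReflTransGen.single this)
    · have hai : a ∈ V s i := by
        rcases hcontain s a i with h' | h'
        · exact h' (hself s a)
        · exact absurd (h' (hself s i)) hmem
      have hpath := H s (le_max_left _ _) a hai
      have : Relation.ReflTransGen Gstar a i := by
        refine Relation.ReflTransGen.mono ?_ _ _ hpath
        rintro x y ⟨t, ht, hm⟩
        exact (hG x y).2 (hN t (le_trans (le_max_right _ _) ht) x y hm)
      exact hSCsink a ha i this
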